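/- arXiv:2501.10033 — 4 statements merged into one kernel-verified Lean document; each statement's English description precedes it below -/
import Mathlib

section
/- Let E be a linearly ordered field, O a convex subring of E containing 1 with O ≠ E, and 𝔪 = {x ∈ E : x = 0 or x⁻¹ ∉ O} its set of infinitesimal elements relative to O. If K is a subfield of E dense in E, then for every x ∈ O there exists c ∈ K ∩ O with x − c ∈ 𝔪. (In other words, the residue map restricted to K ∩ O is surjective onto the residue field of O.) -/
/-- The maximal ideal (set of infinitesimals) of a convex subring `O` of an ordered
field: the elements `x` with `x = 0` or `x⁻¹ ∉ O`. -/
def mIdeal {E : Type*} [Field E] [LinearOrder E] [IsStrictOrderedRing E] (O : Subring E) : Set E :=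
  {x : E | x = 0 ∨ x⁻¹ ∉ O}

/-- If K is a dense subfield of E and O a proper convex subring, then every
element of O is within an infinitesimal of an element of K ∩ O. -/
theorem stmt_2 {E : Type*} [Field E] [LinearOrder E] [IsStrictOrderedRing E] (O : Subring E)
    (hconv : ∀ a b c : E, a ∈ O → c ∈ O → a ≤ b → b ≤ c → b ∈ O)
    (hOne : (O : Set E) ≠ Set.univ)
    (K : Subfield E)
    (hdense : ∀ a b : E, a < b → ∃ k ∈ K, a < k ∧ k < b) :
    ∀ x ∈ O, ∃ c : E, c ∈ K ∧ c ∈ O ∧ x - c ∈ mIdeal O := by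
  intro x hx
  -- find a positive element not in O
  obtain ⟨u, hu⟩ : ∃ u : E, u ∉ O := by
    by_contra h
    push_neg at h
    exact hOne (Set.eq_univ_of_forall h)
  obtain ⟨t, ht, htpos⟩ : ∃ t : E, t ∉ O ∧ 0 < t := by
    rcases lt_trichotomy u 0 with h | h | h
    · exact ⟨-u, fun hm => hu (by simpa using O.neg_mem hm), by linarith⟩
    · exact absurd (h ▸ O.zero_mem) hu
    · exact ⟨u, hu, h⟩
  have ht1 : 1 < t := by
    by_contra h
    push_neg at h
    exact ht (hconv 0 t 1 O.zero_mem O.one_mem htpos.le h)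
  have htinv_pos : 0 < t⁻¹ := inv_pos.mpr htpos
  have htinv_mem : t⁻¹ ∈ O :=
    hconv 0 t⁻¹ 1 O.zero_mem O.one_mem htinv_pos.le (inv_le_one_of_one_le₀ ht1.le)
  obtain ⟨c, hcK, hc1, hc2⟩ := hdense x (x + t⁻¹) (by linarith)
  refine ⟨c, hcK, hconv x c (x + t⁻¹) hx (O.add_mem hx htinv_mem) hc1.le hc2.le, ?_⟩
  right
  intro hmem
  -- (x - c)⁻¹ = -(c - x)⁻¹, and (c - x)⁻¹ > t
  have hcx : 0 < c - x := by linarith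
  have h1 : t < (c - x)⁻¹ := by
    have := (inv_lt_inv₀ htinv_pos hcx).mpr (by linarith)
    simpa using this
  have h2 : (x - c)⁻¹ = -(c - x)⁻¹ := by
    rw [← neg_sub, inv_neg]
  have hneg : -(x - c)⁻¹ ∈ O := O.neg_mem hmem
  have : (c - x)⁻¹ ∈ O := by rw [h2] at hneg; simpa using hneg
  exact ht (hconv 0 t ((c - x)⁻¹) O.zero_mem this htpos.le h1.le)
end

section
/- Let E be a linearly ordered field, O a proper convex subring of E containing 1, with associated valuation v : E^{×} → Γ (where Γ = E^{×}/O^{×} is the value group, ordered so that v(x) ≥ 0 iff x ∈ O). If K is a subfield of E dense in E, then v(K^{×}) = v(E^{×}), i.e., for every z ∈ E with z > 0 there exists c ∈ K with v(c) = v(z). -/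
/-- A dense subfield K of an ordered field E with a proper convex subring O
has full value group: every positive z ∈ E has the same value as some c ∈ K
(`c ≍ z`, i.e. `c/z ∈ O` and `z/c ∈ O`). -/
theorem stmt_3 {E : Type*} [Field E] [LinearOrder E] [IsStrictOrderedRing E] (O : Subring E)
    (hconv : ∀ a b c : E, a ∈ O → c ∈ O → a ≤ b → b ≤ c → b ∈ O)
    (hOne : (O : Set E) ≠ Set.univ)
    (K : Subfield E)
    (hdense : ∀ a b : E, a < b → ∃ k ∈ K, a < k ∧ k < b) :
    ∀ z : E, 0 < z → ∃ c ∈ K, c / z ∈ O ∧ z / c ∈ O := by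
  intro z hz
  obtain ⟨c, hcK, h1, h2⟩ := hdense (z / 2) z (by linarith)
  have hc : 0 < c := lt_trans (by positivity) h1
  refine ⟨c, hcK, ?_, ?_⟩
  · exact hconv 0 (c / z) 1 O.zero_mem O.one_mem (by positivity)
      (by rw [div_le_one hz]; linarith)
  · refine hconv 1 (z / c) 2 O.one_mem (by rw [show (2:E) = 1+1 by norm_num]; exact O.add_mem O.one_mem O.one_mem : (2:E) ∈ O)
      (by rw [le_div_iff₀ hc]; linarith) (by rw [div_le_iff₀ hc]; linarith)
end

section
/- Let E be a linearly ordered field and O a proper convex subring of E containing 1, with residue field k = O/𝔪 and value group Γ = E^{×}/O^{×}. If E contains a subset order-isomorphic to ω₁, then either the residue field k (with its induced linear order) contains a subset order-isomorphic to ω₁, or the value group Γ contains a subset order-isomorphic to ω₁ or one order-isomorphic to the reverse order of ω₁. -/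
open Ordinal Cardinal

namespace Stmt6Aux

abbrev I := {o : Ordinal.{0} // o < (Cardinal.aleph 1).ord}

def isucc (i : I) : I :=
  ⟨i.1 + 1, by
    rw [Ordinal.add_one_eq_succ]
    exact (Cardinal.isSuccLimit_ord (Cardinal.aleph0_le_aleph 1)).succ_lt i.2⟩

lemma lt_isucc (i : I) : i < isucc i :=
  Subtype.mk_lt_mk.mpr (by rw [Ordinal.add_one_eq_succ]; exact Order.lt_succ _)

lemma isucc_strictMono : StrictMono isucc := fun i j hij =>
  Subtype.mk_lt_mk.mpr (by
    rw [Ordinal.add_one_eq_succ, Ordinal.add_one_eq_succ, Order.succ_lt_succ_iff]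
    exact hij)

noncomputable def fseq (base : Ordinal.{0}) (h : Ordinal.{0} → Ordinal.{0}) :
    Ordinal.{0} → Ordinal.{0} :=
  Ordinal.lt_wf.fix fun o IH =>
    max base (Ordinal.bsup o fun c hc => max (IH c hc) (h (IH c hc)) + 1)

lemma fseq_def (base : Ordinal.{0}) (h : Ordinal.{0} → Ordinal.{0}) (o : Ordinal.{0}) :
    fseq base h o =
      max base (Ordinal.bsup o fun c _ => max (fseq base h c) (h (fseq base h c)) + 1) := by
  rw [fseq, WellFounded.fix_eq]

lemma base_le_fseq (base h) (o : Ordinal.{0}) : base ≤ fseq base h o := by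
  rw [fseq_def]; exact le_max_left _ _

lemma fseq_lt_omega1 (base h) (hbase : base < (Cardinal.aleph 1).ord)
    (hh : ∀ a, a < (Cardinal.aleph 1).ord → h a < (Cardinal.aleph 1).ord) :
    ∀ o, o < (Cardinal.aleph 1).ord → fseq base h o < (Cardinal.aleph 1).ord := by
  intro o
  induction o using Ordinal.induction with
  | _ o IH =>
    intro ho
    rw [fseq_def]
    apply max_lt hbase
    apply Cardinal.bsup_lt_ord_of_isRegular Cardinal.isRegular_aleph_one (Cardinal.lt_ord.mp ho)
    intro c hc
    have h1 : fseq base h c < (Cardinal.aleph 1).ord := IH c hc (hc.trans ho)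
    have h2 : h (fseq base h c) < (Cardinal.aleph 1).ord := hh _ h1
    rw [Ordinal.add_one_eq_succ]
    exact (Cardinal.isSuccLimit_ord (Cardinal.aleph0_le_aleph 1)).succ_lt (max_lt h1 h2)

lemma lt_fseq (base h) {c o : Ordinal.{0}} (hco : c < o) :
    fseq base h c < fseq base h o ∧ h (fseq base h c) < fseq base h o := by
  have hle : max (fseq base h c) (h (fseq base h c)) + 1 ≤ fseq base h o := by
    rw [fseq_def base h o]
    exact le_trans (Ordinal.le_bsup _ c hco) (le_max_right _ _)
  have hlt : max (fseq base h c) (h (fseq base h c)) <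
      max (fseq base h c) (h (fseq base h c)) + 1 := by
    rw [Ordinal.add_one_eq_succ]; exact Order.lt_succ _
  exact ⟨lt_of_le_of_lt (le_max_left _ _) (hlt.trans_le hle),
    lt_of_le_of_lt (le_max_right _ _) (hlt.trans_le hle)⟩

lemma exists_fast (base : I) (h : I → I) :
    ∃ φ : I → I, StrictMono φ ∧ (∀ i, base ≤ φ i) ∧ ∀ i j, i < j → h (φ i) < φ j := by
  classical
  set h' : Ordinal.{0} → Ordinal.{0} :=
    fun o => if ho : o < (Cardinal.aleph 1).ord then (h ⟨o, ho⟩).1 else 0 with hh'def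
  have hh' : ∀ a, a < (Cardinal.aleph 1).ord → h' a < (Cardinal.aleph 1).ord := by
    intro a ha
    simp only [hh'def, dif_pos ha]
    exact (h ⟨a, ha⟩).2
  refine ⟨fun i => ⟨fseq base.1 h' i.1, fseq_lt_omega1 _ _ base.2 hh' _ i.2⟩, ?_, ?_, ?_⟩
  · intro i j hij
    exact Subtype.mk_lt_mk.mpr (lt_fseq base.1 h' hij).1
  · intro i
    exact Subtype.coe_le_coe.mp (base_le_fseq base.1 h' i.1)
  · intro i j hij
    have hlt := (lt_fseq base.1 h' (show i.1 < j.1 from hij)).2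
    rw [hh'def] at hlt
    simp only [dif_pos (show fseq base.1 (fun o => if ho : o < (Cardinal.aleph 1).ord then (h ⟨o, ho⟩).1 else 0) i.1 < (Cardinal.aleph 1).ord from fseq_lt_omega1 base.1 h' base.2 hh' _ i.2)] at hlt
    exact Subtype.mk_lt_mk.mpr hlt

end Stmt6Aux

/-- If an ordered field E with a proper convex subring O contains a copy
of ω₁, then the residue field contains a copy of ω₁ (a strictly increasing
ω₁-sequence in O whose successive differences are non-infinitesimal), or the value
group contains a copy of ω₁ (`g j / g i ∈ 𝔪` for `i < j`) or a copy of the reverse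
of ω₁ (`g i / g j ∈ 𝔪` for `i < j`). -/
theorem stmt_6 {E : Type*} [Field E] [LinearOrder E] [IsStrictOrderedRing E] (O : Subring E)
    (hconv : ∀ a b c : E, a ∈ O → c ∈ O → a ≤ b → b ≤ c → b ∈ O)
    (hOne : (O : Set E) ≠ Set.univ)
    (h : ∃ f : {o : Ordinal.{0} // o < (Cardinal.aleph 1).ord} → E, StrictMono f) :
    (∃ f : {o : Ordinal.{0} // o < (Cardinal.aleph 1).ord} → E,
        (∀ i, f i ∈ O) ∧ ∀ i j, i < j → f i < f j ∧ f j - f i ∉ mIdeal O) ∨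
    (∃ g : {o : Ordinal.{0} // o < (Cardinal.aleph 1).ord} → E,
        (∀ i, g i ≠ 0) ∧ ∀ i j, i < j → g j / g i ∈ mIdeal O) ∨
    (∃ g : {o : Ordinal.{0} // o < (Cardinal.aleph 1).ord} → E,
        (∀ i, g i ≠ 0) ∧ ∀ i j, i < j → g i / g j ∈ mIdeal O) := by
  classical
  obtain ⟨x, hx⟩ := h
  -- basic facts about O
  have ratio_mem : ∀ a b : E, 0 < a → a ≤ b → a / b ∈ O := by
    intro a b ha hab
    have hb : 0 < b := ha.trans_le hab
    exact hconv 0 (a / b) 1 O.zero_mem O.one_mem (by positivity) ((div_le_one hb).mpr hab)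
  have hmul : ∀ a b c : E, b ≠ 0 → a / b ∈ O → b / c ∈ O → a / c ∈ O := by
    intro a b c hb h1 h2
    have heq : a / c = a / b * (b / c) := by
      rw [div_mul_div_comm, mul_comm a b]
      exact (mul_div_mul_left a c hb).symm
    rw [heq]; exact O.mul_mem h1 h2
  -- differences
  set d : Stmt6Aux.I → Stmt6Aux.I → E := fun i j => x j - x i with hd
  have dpos : ∀ {i j : Stmt6Aux.I}, i < j → 0 < d i j := fun hij => sub_pos.mpr (hx hij)
  have dmono2 : ∀ {i j k : Stmt6Aux.I}, j ≤ k → d i j ≤ d i k :=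
    fun hjk => sub_le_sub_right (hx.monotone hjk) _
  have dmono1 : ∀ {i i' k : Stmt6Aux.I}, i ≤ i' → d i' k ≤ d i k :=
    fun hii' => sub_le_sub_left (hx.monotone hii') _
  by_cases hQ : ∃ i₀ : Stmt6Aux.I, ∀ j, i₀ < j → ∃ k, j < k ∧ d i₀ k / d i₀ j ∉ O
  · -- strictly decreasing values: copy of reverse ω₁ in Γ
    obtain ⟨i₀, hQ⟩ := hQ
    choose k hk1 hk2 using hQ
    set h : Stmt6Aux.I → Stmt6Aux.I := fun j => if hj : i₀ < j then k j hj else j with hhdef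
    obtain ⟨φ, hφs, hφb, hφd⟩ := Stmt6Aux.exists_fast (Stmt6Aux.isucc i₀) h
    have hφ0 : ∀ ι, i₀ < φ ι := fun ι => lt_of_lt_of_le (Stmt6Aux.lt_isucc i₀) (hφb ι)
    refine Or.inr (Or.inr ⟨fun ι => d i₀ (φ ι), fun ι => (dpos (hφ0 ι)).ne', ?_⟩)
    intro ι κ hικ
    refine Or.inr ?_
    rw [inv_div]
    intro hmem
    have hkle : k (φ ι) (hφ0 ι) ≤ φ κ := by
      have := hφd ι κ hικ
      rw [hhdef] at this
      simp only [dif_pos (hφ0 ι)] at this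
      exact this.le
    have h1 : d i₀ (k (φ ι) (hφ0 ι)) / d i₀ (φ κ) ∈ O :=
      ratio_mem _ _ (dpos ((hφ0 ι).trans (hk1 (φ ι) (hφ0 ι)))) (dmono2 hkle)
    exact hk2 (φ ι) (hφ0 ι) (hmul _ _ _ (dpos (hφ0 κ)).ne' h1 hmem)
  · -- eventual values λ exist
    push_neg at hQ
    choose b hb1 hb2 using hQ
    set r : Stmt6Aux.I → E := fun i => d i (b i) with hr
    have rpos : ∀ i, 0 < r i := fun i => dpos (hb1 i)
    have hbk : ∀ i k, b i ≤ k → d i k / d i (b i) ∈ O := by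
      intro i k hk
      rcases eq_or_lt_of_le hk with heq | hlt
      · rw [← heq, div_self (dpos (hb1 i)).ne']; exact O.one_mem
      · exact hb2 i k hlt
    have lam_mono : ∀ i i' : Stmt6Aux.I, i ≤ i' → r i' / r i ∈ O := by
      intro i i' hii'
      set kk := Stmt6Aux.isucc (max (b i) (b i')) with hkk
      have hk1 : b i < kk := (le_max_left _ _).trans_lt (Stmt6Aux.lt_isucc _)
      have hk2 : b i' < kk := (le_max_right _ _).trans_lt (Stmt6Aux.lt_isucc _)
      have hi'k : i' < kk := (hb1 i').trans hk2
      have hik : i < kk := lt_of_le_of_lt hii' hi'k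
      have F1 : r i' / d i' kk ∈ O := ratio_mem _ _ (rpos i') (dmono2 hk2.le)
      have F2 : d i' kk / d i kk ∈ O := ratio_mem _ _ (dpos hi'k) (dmono1 hii')
      have F3 : d i kk / r i ∈ O := hbk i kk hk1.le
      exact hmul _ _ _ (dpos hik).ne' (hmul _ _ _ (dpos hi'k).ne' F1 F2) F3
    by_cases hR : ∃ i₂ : Stmt6Aux.I, ∀ i', i₂ < i' → r i₂ / r i' ∈ O
    · -- residue field copy of ω₁
      obtain ⟨i₂, hR⟩ := hR
      set e : E := r i₂ with he
      have epos : 0 < e := rpos i₂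
      obtain ⟨φ, hφs, hφb, hφd⟩ := Stmt6Aux.exists_fast i₂ b
      have E0 : ∀ ι, e / r (φ ι) ∈ O := by
        intro ι
        rcases eq_or_lt_of_le (hφb ι) with heq | hlt
        · rw [he, heq, div_self (rpos _).ne']; exact O.one_mem
        · exact hR _ hlt
      have E0' : ∀ ι, r (φ ι) / e ∈ O := fun ι => lam_mono i₂ (φ ι) (hφb ι)
      have key1 : ∀ ι κ, ι < κ → d (φ ι) (φ κ) / e ∈ O := by
        intro ι κ hικ
        exact hmul _ _ _ (rpos _).ne' (hbk (φ ι) (φ κ) (hφd ι κ hικ).le) (E0' ι)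
      have key2 : ∀ ι κ, ι < κ → e / d (φ ι) (φ κ) ∈ O := by
        intro ι κ hικ
        have h2 : r (φ ι) / d (φ ι) (φ κ) ∈ O :=
          ratio_mem _ _ (rpos _) (dmono2 (hφd ι κ hικ).le)
        exact hmul _ _ _ (rpos _).ne' (E0 ι) h2
      set i00 : Stmt6Aux.I := ⟨0, (Cardinal.isSuccLimit_ord (Cardinal.aleph0_le_aleph 1)).pos⟩
        with hi00
      have h0lt : ∀ ι : Stmt6Aux.I, i00 < Stmt6Aux.isucc ι := by
        intro ι
        exact lt_of_le_of_lt (Subtype.coe_le_coe.mp (zero_le (a := ι.1))) (Stmt6Aux.lt_isucc ι)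
      refine Or.inl ⟨fun ι => d (φ i00) (φ (Stmt6Aux.isucc ι)) / e, ?_, ?_⟩
      · intro ι
        exact key1 i00 (Stmt6Aux.isucc ι) (h0lt ι)
      · intro ι κ hικ
        have hsucc : Stmt6Aux.isucc ι < Stmt6Aux.isucc κ := Stmt6Aux.isucc_strictMono hικ
        constructor
        · have hxlt : x (φ (Stmt6Aux.isucc ι)) < x (φ (Stmt6Aux.isucc κ)) := hx (hφs hsucc)
          have : d (φ i00) (φ (Stmt6Aux.isucc ι)) < d (φ i00) (φ (Stmt6Aux.isucc κ)) :=
            sub_lt_sub_right hxlt _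
          exact div_lt_div_of_pos_right this epos
        · have heq2 : d (φ i00) (φ (Stmt6Aux.isucc κ)) / e - d (φ i00) (φ (Stmt6Aux.isucc ι)) / e
              = d (φ (Stmt6Aux.isucc ι)) (φ (Stmt6Aux.isucc κ)) / e := by
            rw [div_sub_div_same, hd]
            congr 1
            exact sub_sub_sub_cancel_right _ _ _
          rw [heq2]
          intro hmem
          rcases hmem with h0 | hinv
          · exact absurd h0 (div_pos (dpos (hφs hsucc)) epos).ne'
          · rw [inv_div] at hinv
            exact hinv (key2 _ _ hsucc)
    · -- strictly increasing values: copy of ω₁ in Γ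
      push_neg at hR
      choose h2 hh1 hh2 using hR
      obtain ⟨φ, hφs, hφb, hφd⟩ :=
        Stmt6Aux.exists_fast ⟨0, (Cardinal.isSuccLimit_ord (Cardinal.aleph0_le_aleph 1)).pos⟩ h2
      refine Or.inr (Or.inl ⟨fun ι => r (φ ι), fun ι => (rpos _).ne', ?_⟩)
      intro ι κ hικ
      refine Or.inr ?_
      rw [inv_div]
      intro hmem
      have hlam : r (φ κ) / r (h2 (φ ι)) ∈ O := lam_mono _ _ (hφd ι κ hικ).le
      exact hh2 (φ ι) (hmul _ _ _ (rpos _).ne' hmem hlam)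
end

section
/- Let Γ be a linearly ordered abelian group fitting in a short exact sequence 0 → A → Γ → B → 0 of ordered abelian groups, where A is a convex subgroup and B = Γ/A with the induced order. If neither A nor B contains a subset order-isomorphic to ω₁, then Γ contains no subset order-isomorphic to ω₁. -/
open Cardinal Ordinal Set

namespace Stmt16Aux

noncomputable section

/-- Any uncountable subset of `ω₁.toType` contains a strictly increasing copy of `ω₁`. -/
lemma key {X : Set (Cardinal.aleph 1 : Cardinal.{0}).ord.ToType} (hX : ¬ X.Countable) :
    ∃ g : (Cardinal.aleph 1 : Cardinal.{0}).ord.ToType → (Cardinal.aleph 1 : Cardinal.{0}).ord.ToType,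
      StrictMono g ∧ ∀ i, g i ∈ X := by
  have h1 : ℵ₁ ≤ #X := le_of_not_gt fun h => hX ((Cardinal.countable_iff_lt_aleph_one X).mpr h)
  have h2 : (Cardinal.aleph 1 : Cardinal.{0}).ord ≤ Ordinal.type ((· < ·) : X → X → Prop) := by
    rw [Cardinal.ord_le, Ordinal.card_type]; exact h1
  haveI : IsWellOrder (Cardinal.aleph 1 : Cardinal.{0}).ord.ToType (· < ·) := isWellOrder_lt
  have h3 : Ordinal.type ((· < ·) : (Cardinal.aleph 1 : Cardinal.{0}).ord.ToType →
      (Cardinal.aleph 1 : Cardinal.{0}).ord.ToType → Prop) ≤ Ordinal.type ((· < ·) : X → X → Prop) := by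
    rw [Ordinal.type_toType]; exact h2
  obtain ⟨emb⟩ := Ordinal.type_le_iff'.mp h3
  exact ⟨fun i => (emb i : _), fun a b h => emb.map_rel_iff.mpr h, fun i => (emb i).2⟩

end

end Stmt16Aux

/-- If A is a convex subgroup of a linearly ordered abelian group Γ and
neither A (with the order from Γ) nor B = Γ/A (with the induced order: mk a < mk b iff
a < b and b - a ∉ A) contains a copy of ω₁, then Γ contains no copy of ω₁. -/
theorem stmt_16 {Γ : Type*} [AddCommGroup Γ] [LinearOrder Γ] [IsOrderedAddMonoid Γ] (A : AddSubgroup Γ)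
    (hconvA : ∀ a b c : Γ, a ∈ A → c ∈ A → a ≤ b → b ≤ c → b ∈ A)
    (hA : ¬ ∃ f : {o : Ordinal.{0} // o < (Cardinal.aleph 1).ord} → Γ,
      (∀ i, f i ∈ A) ∧ StrictMono f)
    (hB : ¬ ∃ f : {o : Ordinal.{0} // o < (Cardinal.aleph 1).ord} → Γ,
      ∀ i j, i < j → f i < f j ∧ f j - f i ∉ A) :
    ¬ ∃ f : {o : Ordinal.{0} // o < (Cardinal.aleph 1).ord} → Γ, StrictMono f := by
  rintro ⟨f, hf⟩
  set W := (Cardinal.aleph 1).ord.ToType with hW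
  let e : Set.Iio (Cardinal.aleph 1).ord ≃o W := Ordinal.ToType.mk
  -- transfer f to a strictly monotone map on W
  let F : W → Γ := fun w => f ⟨(e.symm w : Ordinal), (e.symm w).2⟩
  have hF : StrictMono F := by
    intro a b hab
    exact hf (show ((e.symm a : Ordinal)) < (e.symm b : Ordinal) from e.symm.lt_iff_lt.mpr hab)
  -- the set of "class minima"
  let T : Set W := {i | ∀ j, j < i → F i - F j ∉ A}
  -- embedding of the index type into W
  let ι : {o : Ordinal.{0} // o < (Cardinal.aleph 1).ord} → W := fun i => e ⟨i.1, i.2⟩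
  have hι : StrictMono ι := fun i j hij => e.lt_iff_lt.mpr hij
  by_cases hT : T.Countable
  · -- some class is uncountable, embed ω₁ into it, landing in A after translation
    by_cases hfib : ∃ t : W, ¬ ({w : W | F w - F t ∈ A}).Countable
    · obtain ⟨t, ht⟩ := hfib
      obtain ⟨g, hg, hgX⟩ := Stmt16Aux.key ht
      refine hA ⟨fun i => F (g (ι i)) - F t, fun i => hgX (ι i), ?_⟩
      intro i j hij
      exact sub_lt_sub_right (hF (hg (hι hij))) _
    · push_neg at hfib
      -- every class countable and T countable ⇒ W countable, contradiction
      have hm : ∀ w : W, ∃ t ∈ T, F w - F t ∈ A := by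
        intro w
        have hne : ({j : W | F w - F j ∈ A}).Nonempty := ⟨w, by simp [A.zero_mem]⟩
        set m := (wellFounded_lt (α := W)).min _ hne with hmdef
        have hmem : F w - F m ∈ A := (wellFounded_lt (α := W)).min_mem _ hne
        refine ⟨m, ?_, hmem⟩
        intro j hj hjA
        refine (wellFounded_lt (α := W)).not_lt_min _ ?_ hj
        show F w - F j ∈ A
        have : (F w - F m) + (F m - F j) ∈ A := A.add_mem hmem hjA
        simpa using this
      have huniv : (Set.univ : Set W).Countable := by
        refine Set.Countable.mono ?_ (hT.biUnion fun t _ => hfib t)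
        intro w _
        obtain ⟨t, htT, hwt⟩ := hm w
        exact Set.mem_biUnion htT hwt
      have hcW : Countable W := Set.countable_univ_iff.mp huniv
      have : #W ≤ ℵ₀ := Cardinal.mk_le_aleph0
      rw [hW, Cardinal.mk_toType, Cardinal.card_ord] at this
      exact absurd this Cardinal.aleph0_lt_aleph_one.not_ge
  · -- T is uncountable: embed ω₁ into T, giving a copy of ω₁ in B
    obtain ⟨g, hg, hgT⟩ := Stmt16Aux.key hT
    refine hB ⟨fun i => F (g (ι i)), fun i j hij => ?_⟩
    have h1 : g (ι i) < g (ι j) := hg (hι hij)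
    exact ⟨hF h1, hgT (ι j) _ h1⟩
end
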